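/- Let a > 0, Δt > 0, and z ≥ 0 be real numbers. Then every complex root ξ of the quadratic ξ² − (2 − aΔt − Δt²z)ξ + (1 − aΔt) = 0 satisfies |ξ| ≤ 1 if and only if Δt²z + 2aΔt ≤ 4. In particular, for z > 0 this holds if and only if Δt ≤ √(4/z + (a/z)²) − a/z. -/

import Mathlib

/-- CFL condition for the fully explicit backward-difference accelerated scheme:
all roots of `ξ² − (2 − aΔt − Δt²z)ξ + (1 − aΔt) = 0` have modulus at most 1 iff
`Δt²z + 2aΔt ≤ 4`; for `z > 0` this is equivalent to
`Δt ≤ √(4/z + (a/z)²) − a/z`. -/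
theorem backward_scheme_CFL (a Δt z : ℝ) (ha : 0 < a) (hΔt : 0 < Δt) (hz : 0 ≤ z) :
    ((∀ ξ : ℂ, ξ ^ 2 - ((2 - a * Δt - Δt ^ 2 * z : ℝ) : ℂ) * ξ +
        ((1 - a * Δt : ℝ) : ℂ) = 0 → ‖ξ‖ ≤ 1) ↔
        Δt ^ 2 * z + 2 * a * Δt ≤ 4) ∧
      (0 < z → (Δt ^ 2 * z + 2 * a * Δt ≤ 4 ↔
        Δt ≤ Real.sqrt (4 / z + (a / z) ^ 2) - a / z)) := by
  set b : ℝ := 2 - a * Δt - Δt ^ 2 * z with hb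
  set c : ℝ := 1 - a * Δt with hc
  clear_value b c
  constructor
  · constructor
    · -- forward: contrapose
      intro h
      by_contra hcond
      push_neg at hcond
      -- hcond : 4 < Δt^2*z + 2*a*Δt
      set D : ℝ := b ^ 2 - 4 * c with hD
      have hDpos : (b + 2) ^ 2 < D := by nlinarith [sq_nonneg (b+2)]
      set d : ℝ := Real.sqrt D with hd
      have hD0 : 0 ≤ D := le_trans (sq_nonneg _) hDpos.le
      have hd2 : d ^ 2 = D := Real.sq_sqrt hD0
      have hd0 : 0 ≤ d := Real.sqrt_nonneg _
      have hdb : b + 2 < d := by nlinarith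
      set r : ℝ := (b - d) / 2 with hr
      have hroot : r ^ 2 - b * r + c = 0 := by
        rw [hr]; ring_nf; nlinarith [hd2]
      have := h ((r : ℂ))
      rw [Complex.norm_real, Real.norm_eq_abs] at this
      have h1 : |r| ≤ 1 := by
        apply this
        have h0 : ((r ^ 2 - b * r + c : ℝ) : ℂ) = 0 := by rw [hroot]; norm_num
        push_cast at h0 ⊢
        linear_combination h0
      have : r < -1 := by rw [hr]; linarith
      rw [abs_le] at h1
      linarith [h1.1]
    · -- backward
      intro hcond ξ hξ
      have key : (‖ξ‖) ^ 2 ≤ 1 := by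
        rw [Complex.sq_norm, Complex.normSq_apply]
        set x : ℝ := ξ.re
        set y : ℝ := ξ.im
        have him : y * (2 * x - b) = 0 := by
          have := congrArg Complex.im hξ
          simp [pow_two, Complex.mul_im, Complex.mul_re, Complex.sub_im, Complex.add_im] at this
          linarith [this]
        have hre : x ^ 2 - y ^ 2 - b * x + c = 0 := by
          have := congrArg Complex.re hξ
          simp [pow_two, Complex.mul_im, Complex.mul_re] at this
          nlinarith [this]
        rcases mul_eq_zero.mp him with hy | hbx
        · -- real root
          have hx : x ^ 2 - b * x + c = 0 := by nlinarith
          have hx1 : x ^ 2 ≤ 1 := by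
            by_contra hgt
            push_neg at hgt
            rcases le_or_gt x 0 with hx0 | hx0
            · have hxm : x < -1 := by nlinarith
              nlinarith [mul_pos (neg_pos.mpr (show x + 1 < 0 by linarith)) (neg_pos.mpr (show x - 1 - b < 0 by nlinarith))]
            · have hxp : 1 < x := by nlinarith
              nlinarith [mul_pos (show (0:ℝ) < x - 1 by linarith) (show (0:ℝ) < x + 1 - b by nlinarith)]
          nlinarith
        · -- complex pair : 2x = b, x²+y² = c
          have : x * x + y * y = c := by nlinarith
          rw [this]; simp [hc]; nlinarith
      nlinarith [norm_nonneg ξ, key]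
  · intro hzpos
    have hz' : z ≠ 0 := ne_of_gt hzpos
    have harg : 0 ≤ 4 / z + (a / z) ^ 2 := by positivity
    have e1 : z * ((Δt + a / z) ^ 2) = z * Δt ^ 2 + 2 * a * Δt + a ^ 2 / z := by
      field_simp
      ring
    have e2 : z * (4 / z + (a / z) ^ 2) = 4 + a ^ 2 / z := by
      field_simp
    constructor
    · intro hcond
      have h2 : (Δt + a / z) ^ 2 ≤ 4 / z + (a / z) ^ 2 := by
        have h3 : z * ((Δt + a / z) ^ 2) ≤ z * (4 / z + (a / z) ^ 2) := by
          rw [e1, e2]; linarith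
        exact le_of_mul_le_mul_left h3 hzpos
      have h1 : Δt + a / z ≤ Real.sqrt (4 / z + (a / z) ^ 2) :=
        (Real.le_sqrt (by positivity) harg).mpr h2
      linarith
    · intro hle
      have h1 : Δt + a / z ≤ Real.sqrt (4 / z + (a / z) ^ 2) := by linarith
      have h2 : (Δt + a / z) ^ 2 ≤ 4 / z + (a / z) ^ 2 := by
        calc (Δt + a / z) ^ 2 ≤ Real.sqrt (4 / z + (a / z) ^ 2) ^ 2 :=
              pow_le_pow_left₀ (by positivity) h1 2
            _ = 4 / z + (a / z) ^ 2 := Real.sq_sqrt harg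
      have h3 := mul_le_mul_of_nonneg_left h2 hzpos.le
      rw [e1, e2] at h3
      linarith
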